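/- For every ξ ∈ ℂ with 0 < |ξ| < 1, all β, β' ∈ ℂ, every integer m ≥ 0, and every c with |ξ| < c < 1/|ξ|, one has (2πi)^{-1} ∮_{|η|=c} (1 − ξη)^{β} (1 − ξ/η)^{−β'} η^{m−1} dη = ((β')_m / m!) · ξ^m · F(β'+m, −β; m+1; ξ²). -/

import Mathlib

set_option maxHeartbeats 1000000


open Complex Metric
open scoped NNReal Real

/-- The Pochhammer symbol `(a)_m = a (a+1) ⋯ (a+m−1)`, with `(a)_0 = 1`. -/
noncomputable def pochhammer' (a : ℂ) (m : ℕ) : ℂ := ∏ k ∈ Finset.range m, (a + (k : ℂ))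

/-- The Gauss hypergeometric function `F(a, b; c; x)` with positive integer
parameter `c`. -/
noncomputable def gaussHyp (a b : ℂ) (c : ℕ) (x : ℂ) : ℂ :=
  ∑' n : ℕ, pochhammer' a n * pochhammer' b n * x ^ n /
    (pochhammer' (c : ℂ) n * (n.factorial : ℂ))

lemma pochhammer'_succ (a : ℂ) (n : ℕ) :
    pochhammer' a (n + 1) = pochhammer' a n * (a + n) := Finset.prod_range_succ _ _

lemma pochhammer'_add (x : ℂ) (mm nn : ℕ) :
    pochhammer' x (mm + nn) = pochhammer' x mm * pochhammer' (x + mm) nn := by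
  rw [pochhammer', pochhammer', pochhammer', Finset.prod_range_add]
  congr 1
  refine Finset.prod_congr rfl fun k _ => ?_
  push_cast; ring

lemma pochhammer'_nat (mm nn : ℕ) :
    (mm.factorial : ℂ) * pochhammer' ((mm : ℂ) + 1) nn = ((mm + nn).factorial : ℂ) := by
  induction nn with
  | zero => simp [pochhammer']
  | succ n ih =>
    rw [pochhammer'_succ]
    calc (mm.factorial : ℂ) * (pochhammer' ((mm:ℂ)+1) n * ((mm:ℂ)+1+n))
        = ((mm+n).factorial : ℂ) * ((mm:ℂ)+1+n) := by rw [← ih]; ring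
      _ = ((mm + (n+1)).factorial : ℂ) := by
          rw [show mm + (n+1) = (mm+n)+1 by ring, Nat.factorial_succ]
          push_cast; ring

lemma pochhammer'_nat_ne_zero (mm nn : ℕ) : pochhammer' ((mm : ℂ) + 1) nn ≠ 0 := by
  intro h
  have h2 := pochhammer'_nat mm nn
  rw [h, mul_zero] at h2
  exact Nat.cast_ne_zero.2 (Nat.factorial_ne_zero (mm + nn)) h2.symm
lemma summable_poch (x : ℂ) {r : ℝ} (hr0 : 0 ≤ r) (hr1 : r < 1) :
    Summable (fun n : ℕ => ‖pochhammer' x n‖ / n.factorial * r ^ n) := by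
  set q : ℝ := (1 + r) / 2 with hq
  have hrq : r < q := by rw [hq]; linarith
  have hq1 : q < 1 := by rw [hq]; linarith
  have hq0 : 0 < q := by rw [hq]; linarith
  clear_value q
  apply summable_of_ratio_norm_eventually_le hq1
  rw [Filter.eventually_atTop]
  refine ⟨Nat.ceil ((r * ‖x‖) / (q - r)), fun n hn => ?_⟩
  have hn' : (r * ‖x‖) / (q - r) ≤ n := (Nat.ceil_le.1 hn)
  have hxr : r * ‖x‖ ≤ (q - r) * n := by
    rw [div_le_iff₀ (by linarith)] at hn'; linarith [hn']
  have hfact : (0:ℝ) < n.factorial := by positivity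
  have key : ‖pochhammer' x (n+1)‖ / (n+1).factorial * r ^ (n+1)
      ≤ q * (‖pochhammer' x n‖ / n.factorial * r ^ n) := by
    rw [pochhammer'_succ, norm_mul, Nat.factorial_succ]
    have h1 : ‖x + n‖ ≤ ‖x‖ + n := by
      simpa using norm_add_le x n
    have h2 : ‖x + n‖ * r ≤ q * (n + 1) := by
      have : (‖x‖ + n) * r ≤ q * (n+1) := by nlinarith [norm_nonneg x]
      nlinarith [norm_nonneg (x + (n:ℂ)), h1]
    have hp := norm_nonneg (pochhammer' x n)
    have hrn : (0:ℝ) ≤ r ^ n := by positivity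
    rw [pow_succ]
    push_cast
    rw [div_mul_eq_mul_div, div_mul_eq_mul_div, div_le_iff₀ (by positivity)]
    have expand : ‖pochhammer' x n‖ * ‖x + n‖ * (r ^ n * r)
        = (‖pochhammer' x n‖ * r ^ n) * (‖x+n‖ * r) := by ring
    rw [expand]
    have h3 : (‖pochhammer' x n‖ * r ^ n) * (‖x+n‖ * r)
        ≤ (‖pochhammer' x n‖ * r ^ n) * (q * (n+1)) :=
      mul_le_mul_of_nonneg_left h2 (by positivity)
    refine le_trans h3 (le_of_eq ?_)
    field_simp
  calc ‖‖pochhammer' x (n+1)‖ / (n+1).factorial * r ^ (n+1)‖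
      = ‖pochhammer' x (n+1)‖ / (n+1).factorial * r ^ (n+1) := by
        rw [Real.norm_eq_abs, _root_.abs_of_nonneg (by positivity)]
    _ ≤ q * (‖pochhammer' x n‖ / n.factorial * r ^ n) := key
    _ = q * ‖‖pochhammer' x n‖ / n.factorial * r ^ n‖ := by
        rw [Real.norm_eq_abs, _root_.abs_of_nonneg (by positivity)]
lemma hasDerivAt_one_sub_cpow (γ : ℂ) {w : ℂ} (hw : ‖w‖ < 1) :
    HasDerivAt (fun z : ℂ => (1 - z) ^ γ) (-(γ * (1 - w) ^ (γ - 1))) w := by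
  have h0 : 0 < (1 - w).re ∨ (1 - w).im ≠ 0 := by
    left
    have := Complex.abs_re_le_norm w
    simp only [Complex.sub_re, Complex.one_re]
    have : w.re ≤ ‖w‖ := Complex.re_le_norm w
    linarith
  have h1 : HasDerivAt (fun z : ℂ => 1 - z) (-1) w := (hasDerivAt_id w).const_sub 1
  have := h1.cpow_const (c := γ) h0
  convert this using 1
  ring

lemma iteratedDeriv_one_sub_cpow (β : ℂ) (n : ℕ) :
    ∀ w ∈ ball (0:ℂ) 1, iteratedDeriv n (fun z : ℂ => (1 - z) ^ β) w
      = pochhammer' (-β) n * (1 - w) ^ (β - n) := by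
  induction n with
  | zero =>
    intro w _
    simp [pochhammer', iteratedDeriv_zero]
  | succ n ih =>
    intro w hw
    rw [iteratedDeriv_succ]
    have hev : (iteratedDeriv n (fun z : ℂ => (1 - z) ^ β))
        =ᶠ[nhds w] (fun z => pochhammer' (-β) n * (1 - z) ^ (β - n)) := by
      filter_upwards [isOpen_ball.mem_nhds hw] with z hz using ih z hz
    rw [hev.deriv_eq]
    have hw' : ‖w‖ < 1 := by simpa using hw
    have hD : HasDerivAt (fun z => pochhammer' (-β) n * (1 - z) ^ (β - n))
        (pochhammer' (-β) n * -((β - n) * (1 - w) ^ (β - n - 1))) w :=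
      (hasDerivAt_one_sub_cpow (β - n) hw').const_mul _
    rw [hD.deriv, pochhammer'_succ]
    push_cast
    ring_nf

lemma hasSum_one_sub_cpow (β : ℂ) {z : ℂ} (hz : ‖z‖ < 1) :
    HasSum (fun n : ℕ => pochhammer' (-β) n / n.factorial * z ^ n) ((1 - z) ^ β) := by
  set f : ℂ → ℂ := fun z => (1 - z) ^ β with hf
  set R : ℝ≥0 := ⟨(‖z‖ + 1) / 2, by positivity⟩ with hR
  have hzR : ‖z‖ < R := by
    show ‖z‖ < (‖z‖ + 1) / 2; linarith
  have hR1 : (R : ℝ) < 1 := by show (‖z‖ + 1) / 2 < 1; linarith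
  have hR0 : 0 < R := NNReal.coe_pos.1 (lt_of_le_of_lt (norm_nonneg z) hzR)
  have hdiff : DifferentiableOn ℂ f (closedBall (0:ℂ) R) := by
    intro w hw
    have hw1 : ‖w‖ < 1 := by
      have : ‖w‖ ≤ R := by simpa using hw
      linarith
    exact ((hasDerivAt_one_sub_cpow β hw1).differentiableAt).differentiableWithinAt
  have hps := hdiff.hasFPowerSeriesOnBall hR0
  have hzmem : z ∈ Metric.eball (0:ℂ) R := by
    rw [Metric.mem_eball, edist_zero_right, enorm_eq_nnnorm, ENNReal.coe_lt_coe,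
      ← NNReal.coe_lt_coe, coe_nnnorm]
    exact hzR
  have hsum := hps.hasSum_iteratedFDeriv hzmem
  simp only [zero_add] at hsum
  have key : ∀ n : ℕ, ((n.factorial : ℂ))⁻¹ • (iteratedFDeriv ℂ n f 0 fun _ => z)
      = pochhammer' (-β) n / n.factorial * z ^ n := by
    intro n
    have h1 : (iteratedFDeriv ℂ n f 0 fun _ => z)
        = (∏ _i : Fin n, z) • (iteratedFDeriv ℂ n f 0 fun _ => (1:ℂ)) := by
      rw [← ContinuousMultilinearMap.map_smul_univ]
      simp
    have h2 : (iteratedFDeriv ℂ n f 0 fun _ => (1:ℂ)) = iteratedDeriv n f 0 :=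
      (iteratedDeriv_eq_iteratedFDeriv).symm
    have h3 : iteratedDeriv n f 0 = pochhammer' (-β) n := by
      have := iteratedDeriv_one_sub_cpow β n 0 (by simp)
      simpa using this
    rw [h1, h2, h3]
    simp only [Finset.prod_const, Finset.card_univ, Fintype.card_fin, smul_eq_mul]
    field_simp
  rw [show ((1:ℂ) - z) ^ β = f z from rfl]
  exact HasSum.congr_fun hsum fun n => (key n).symm

theorem gauss_contour_integral'
    (ξ : ℂ) (hξ0 : ξ ≠ 0) (hξ1 : ‖ξ‖ < 1) (β β' : ℂ) (m : ℕ) (c : ℝ)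
    (hc1 : ‖ξ‖ < c) (hc2 : c < 1 / ‖ξ‖) :
    (2 * Real.pi * Complex.I)⁻¹ *
        (∮ η in C(0, c),
          (1 - ξ * η) ^ β * (1 - ξ / η) ^ (-β') * η ^ ((m : ℤ) - 1)) =
      pochhammer' β' m / (m.factorial : ℂ) * ξ ^ m *
        gaussHyp (β' + m) (-β) (m + 1) (ξ ^ 2) := by
  have hξa : 0 < ‖ξ‖ := by simpa using hξ0
  have hc0 : 0 < c := lt_trans hξa hc1
  have hr1 : ‖ξ‖ * c < 1 := by
    rw [lt_div_iff₀ hξa] at hc2; linarith [hc2]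
  have hr2 : ‖ξ‖ / c < 1 := (div_lt_one hc0).2 hc1
  have hr1' : 0 ≤ ‖ξ‖ * c := by positivity
  have hr2' : 0 ≤ ‖ξ‖ / c := by positivity
  set a : ℕ → ℂ := fun j => pochhammer' (-β) j / j.factorial * ξ ^ j with ha
  set b : ℕ → ℂ := fun k => pochhammer' β' k / k.factorial * ξ ^ k with hb
  set F : ℕ × ℕ → ℝ → ℂ := fun p θ =>
    deriv (circleMap 0 c) θ •
      ((a p.1 * b p.2) * (circleMap 0 c θ) ^ ((p.1 : ℤ) - p.2 + m - 1)) with hF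
  set A1 : ℕ → ℝ := fun j =>
    ‖pochhammer' (-β) j‖ / j.factorial * (‖ξ‖ * c) ^ j with hA1
  set A2 : ℕ → ℝ := fun k =>
    ‖pochhammer' β' k‖ / k.factorial * (‖ξ‖ / c) ^ k with hA2
  set B : ℕ × ℕ → ℝ := fun p => (c * c ^ ((m : ℤ) - 1)) * (A1 p.1 * A2 p.2) with hB
  -- auxiliary facts about the circle map
  have hcm : ∀ θ : ℝ, ‖circleMap 0 c θ‖ = c := fun θ => by
    rw [norm_circleMap_zero, abs_of_pos hc0]
  have hcm0 : ∀ θ : ℝ, circleMap 0 c θ ≠ 0 := fun θ => circleMap_ne_center hc0.ne'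
  -- norm of F
  have hnormF : ∀ p : ℕ × ℕ, ∀ θ : ℝ, ‖F p θ‖ = B p := by
    rintro ⟨j, k⟩ θ
    simp only [hF, hB, hA1, hA2, ha, hb, smul_eq_mul, deriv_circleMap,
      norm_mul, norm_div, norm_pow, norm_zpow, norm_inv, Complex.norm_I, Complex.norm_natCast,
      hcm, mul_one]
    rw [show ((j : ℤ) - k + m - 1) = (j : ℤ) + (-(k : ℤ)) + ((m : ℤ) - 1) by ring,
      zpow_add₀ hc0.ne', zpow_add₀ hc0.ne', zpow_natCast, zpow_neg, zpow_natCast,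
      mul_pow, div_pow]
    have hck : (c : ℝ) ^ k ≠ 0 := by positivity
    field_simp
  -- summability of the bound
  have hBsum : Summable B := by
    apply Summable.mul_left
    exact (summable_poch (-β) hr1' hr1).mul_of_nonneg (summable_poch β' hr2' hr2)
      (fun j => by positivity) (fun k => by positivity)
  -- pointwise HasSum of F
  have hlim : ∀ θ : ℝ, HasSum (fun p : ℕ × ℕ => F p θ)
      (deriv (circleMap 0 c) θ •
        ((1 - ξ * circleMap 0 c θ) ^ β * (1 - ξ / circleMap 0 c θ) ^ (-β') *
          (circleMap 0 c θ) ^ ((m : ℤ) - 1))) := by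
    intro θ
    set η : ℂ := circleMap 0 c θ with hη
    have hηa : ‖η‖ = c := hcm θ
    have hη0 : η ≠ 0 := hcm0 θ
    have h1 : HasSum (fun j : ℕ => a j * η ^ (j : ℤ)) ((1 - ξ * η) ^ β) := by
      have := hasSum_one_sub_cpow β (z := ξ * η)
        (by rw [norm_mul, hηa]; exact hr1)
      refine HasSum.congr_fun this fun j => ?_
      simp only [ha, mul_pow, zpow_natCast]; ring
    have h2 : HasSum (fun k : ℕ => b k * η ^ (-(k : ℤ))) ((1 - ξ / η) ^ (-β')) := by
      have := hasSum_one_sub_cpow (-β') (z := ξ / η)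
        (by rw [norm_div, hηa]; exact hr2)
      rw [neg_neg] at this
      refine HasSum.congr_fun this fun k => ?_
      simp only [hb, div_pow, zpow_neg, zpow_natCast]; ring
    have hn1 : Summable fun j : ℕ => ‖a j * η ^ (j : ℤ)‖ := by
      refine Summable.congr (summable_poch (-β) hr1' hr1) fun j => ?_
      simp only [ha, norm_mul, norm_div, norm_pow, norm_zpow,
        Complex.norm_natCast, hηa, zpow_natCast, mul_pow, norm_inv]
      ring
    have hn2 : Summable fun k : ℕ => ‖b k * η ^ (-(k : ℤ))‖ := by
      refine Summable.congr (summable_poch β' hr2' hr2) fun k => ?_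
      simp only [hb, norm_mul, norm_div, norm_pow, norm_zpow,
        Complex.norm_natCast, hηa, zpow_neg, zpow_natCast, div_pow, norm_inv]
      have hck : (c : ℝ) ^ k ≠ 0 := by positivity
      field_simp
    have hprodsum : Summable fun p : ℕ × ℕ =>
        (a p.1 * η ^ (p.1 : ℤ)) * (b p.2 * η ^ (-(p.2 : ℤ))) :=
      summable_mul_of_summable_norm (f := fun j => a j * η ^ (j : ℤ))
        (g := fun k => b k * η ^ (-(k : ℤ))) hn1 hn2
    have hps := hprodsum.hasSum
    have heq := h1.mul_eq h2 hps
    rw [← heq] at hps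
    have := hps.mul_left (deriv (circleMap 0 c) θ * η ^ ((m : ℤ) - 1))
    refine HasSum.congr_fun (by convert this using 1; show (_ : ℂ) * _ = _; ring; rfl)
      fun p => ?_
    simp only [hF, ← hη, smul_eq_mul]
    rw [show ((p.1 : ℤ) - p.2 + m - 1) = (p.1 : ℤ) + (-(p.2 : ℤ)) + ((m : ℤ) - 1) by ring,
      zpow_add₀ hη0, zpow_add₀ hη0]
    ring
  -- measurability
  have hmeas : ∀ p : ℕ × ℕ, Continuous (F p) := by
    rintro ⟨j, k⟩
    have h1 : Continuous fun θ => deriv (circleMap 0 c) θ := by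
      simp only [deriv_circleMap]
      exact (continuous_circleMap 0 c).mul continuous_const
    have h2 : Continuous fun θ => (circleMap 0 c θ) ^ ((j : ℤ) - k + m - 1) :=
      (continuous_circleMap 0 c).zpow₀ _ fun θ => Or.inl (hcm0 θ)
    exact h1.smul (continuous_const.mul h2)
  -- dominated convergence
  have hmain : HasSum (fun p : ℕ × ℕ => ∫ θ in (0:ℝ)..(2 * Real.pi), F p θ)
      (∫ θ in (0:ℝ)..(2 * Real.pi), deriv (circleMap 0 c) θ •
        ((1 - ξ * circleMap 0 c θ) ^ β * (1 - ξ / circleMap 0 c θ) ^ (-β') *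
          (circleMap 0 c θ) ^ ((m : ℤ) - 1))) := by
    refine intervalIntegral.hasSum_integral_of_dominated_convergence
      (fun p _ => B p) (fun p => (hmeas p).aestronglyMeasurable) (fun p => ?_) ?_ ?_ ?_
    · exact Filter.Eventually.of_forall fun θ _ => le_of_eq (hnormF p θ)
    · exact Filter.Eventually.of_forall fun θ _ => hBsum
    · exact intervalIntegrable_const
    · exact Filter.Eventually.of_forall fun θ _ => hlim θ
  -- identify the total integral with the circle integral
  have hint_eq : (∫ θ in (0:ℝ)..(2 * Real.pi), deriv (circleMap 0 c) θ •
        ((1 - ξ * circleMap 0 c θ) ^ β * (1 - ξ / circleMap 0 c θ) ^ (-β') *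
          (circleMap 0 c θ) ^ ((m : ℤ) - 1)))
      = ∮ η in C(0, c), (1 - ξ * η) ^ β * (1 - ξ / η) ^ (-β') * η ^ ((m : ℤ) - 1) := rfl
  -- evaluate each term
  have hterm : ∀ p : ℕ × ℕ, (∫ θ in (0:ℝ)..(2 * Real.pi), F p θ)
      = a p.1 * b p.2 * (if p.2 = p.1 + m then (2 * Real.pi * Complex.I) else 0) := by
    rintro ⟨j, k⟩
    have heq1 : ∀ θ : ℝ, F (j, k) θ =
        (a j * b k) * (deriv (circleMap 0 c) θ •
          (circleMap 0 c θ) ^ ((j : ℤ) - k + m - 1)) := by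
      intro θ
      simp only [hF, smul_eq_mul]
      ring
    rw [intervalIntegral.integral_congr (fun θ _ => heq1 θ),
      intervalIntegral.integral_const_mul]
    have hzint : (∫ θ in (0:ℝ)..(2 * Real.pi), deriv (circleMap 0 c) θ •
        (circleMap 0 c θ) ^ ((j : ℤ) - k + m - 1))
        = ∮ z in C(0, c), z ^ ((j : ℤ) - k + m - 1) := rfl
    rw [hzint]
    by_cases hk : k = j + m
    · rw [if_pos hk]
      have hexp : (j : ℤ) - k + m - 1 = -1 := by subst hk; push_cast; ring
      rw [hexp]
      have : (fun z : ℂ => z ^ (-1 : ℤ)) = fun z : ℂ => (z - 0)⁻¹ := by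
        funext z; rw [zpow_neg_one, sub_zero]
      rw [show (∮ z in C(0, c), z ^ (-1 : ℤ)) = ∮ z in C(0, c), (z - 0)⁻¹ by rw [this],
        circleIntegral.integral_sub_inv_of_mem_ball (mem_ball_self hc0)]
    · rw [if_neg hk]
      have hexp : (j : ℤ) - k + m - 1 ≠ -1 := by omega
      have : (fun z : ℂ => z ^ ((j : ℤ) - k + m - 1))
          = fun z : ℂ => (z - 0) ^ ((j : ℤ) - k + m - 1) := by
        funext z; rw [sub_zero]
      rw [show (∮ z in C(0, c), z ^ ((j : ℤ) - k + m - 1))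
          = ∮ z in C(0, c), (z - 0) ^ ((j : ℤ) - k + m - 1) by rw [this],
        circleIntegral.integral_sub_zpow_of_ne hexp, mul_zero]
  rw [hint_eq] at hmain
  have hG : HasSum (fun p : ℕ × ℕ =>
      a p.1 * b p.2 * (if p.2 = p.1 + m then (2 * Real.pi * Complex.I) else 0))
      (∮ η in C(0, c), (1 - ξ * η) ^ β * (1 - ξ / η) ^ (-β') * η ^ ((m : ℤ) - 1)) := by
    refine HasSum.congr_fun hmain fun p => (hterm p).symm
  set e : ℕ → ℕ × ℕ := fun j => (j, j + m) with he
  have hinj : Function.Injective e := fun x y h => by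
    simpa [he] using congrArg Prod.fst h
  have hzero : ∀ p : ℕ × ℕ, p ∉ Set.range e →
      a p.1 * b p.2 * (if p.2 = p.1 + m then (2 * Real.pi * Complex.I) else 0) = 0 := by
    rintro ⟨j, k⟩ hp
    rw [if_neg, mul_zero]
    intro hk
    exact hp ⟨j, by simp [he]; omega⟩
  have hG' : HasSum (fun j : ℕ => a j * b (j + m) * (2 * Real.pi * Complex.I))
      (∮ η in C(0, c), (1 - ξ * η) ^ β * (1 - ξ / η) ^ (-β') * η ^ ((m : ℤ) - 1)) := by
    have := (hinj.hasSum_iff hzero).2 hG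
    refine HasSum.congr_fun this fun j => ?_
    simp [he, Function.comp]
  have h2pi : (2 * (Real.pi : ℂ) * Complex.I) ≠ 0 := Complex.two_pi_I_ne_zero
  have hfinal := hG'.mul_left (2 * (Real.pi : ℂ) * Complex.I)⁻¹
  have hfinal' : HasSum (fun j : ℕ => a j * b (j + m))
      ((2 * (Real.pi : ℂ) * Complex.I)⁻¹ *
        ∮ η in C(0, c), (1 - ξ * η) ^ β * (1 - ξ / η) ^ (-β') * η ^ ((m : ℤ) - 1)) := by
    refine HasSum.congr_fun hfinal fun j => ?_
    field_simp
  rw [← hfinal'.tsum_eq]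
  -- now the right-hand side
  rw [gaussHyp, ← tsum_mul_left]
  refine tsum_congr fun n => ?_
  have hfac : ((m + n).factorial : ℂ) = (m.factorial : ℂ) * pochhammer' ((m : ℂ) + 1) n :=
    (pochhammer'_nat m n).symm
  have hpoch : pochhammer' β' (n + m) = pochhammer' β' m * pochhammer' (β' + m) n := by
    rw [add_comm n m, pochhammer'_add]
  have hm0 : (m.factorial : ℂ) ≠ 0 := Nat.cast_ne_zero.2 (Nat.factorial_ne_zero _)
  have hn0 : (n.factorial : ℂ) ≠ 0 := Nat.cast_ne_zero.2 (Nat.factorial_ne_zero _)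
  have hp0 : pochhammer' ((m : ℂ) + 1) n ≠ 0 := pochhammer'_nat_ne_zero m n
  simp only [ha, hb]
  rw [hpoch, show ((n + m).factorial : ℂ) = ((m + n).factorial : ℂ) by rw [add_comm], hfac]
  rw [show (((m : ℕ) + 1 : ℕ) : ℂ) = (m : ℂ) + 1 by push_cast; ring]
  field_simp
  ring
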